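/- Let H be a Hilbert space, C ⊆ B(H) a C*-subalgebra, and X ⊆ B(H) a closed C-bimodule with X*·X ⊆ C. Let U be the bilateral shift on ℓ²(ℤ), and consider the algebra B generated by X⊗U and C⊗I inside B(H⊗ℓ²(ℤ)). Then the norm-closed algebra A = closure(alg(X⊗U, C⊗I)) satisfies A*·A ⊆ closure(A + A*). -/

import Mathlib

open scoped Pointwise

set_option maxHeartbeats 1000000

/-- The concrete model of the tensor algebra of a C*-correspondence: the closed algebra
generated by `X ⊗ U` and `C ⊗ I` on `H ⊗ ℓ²(ℤ)` (with `U` the bilateral shift,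
realized on `lp (fun _ : ℤ => H) 2`) is semi-Dirichlet. -/
theorem stmt_3 {H : Type*} [NormedAddCommGroup H] [InnerProductSpace ℂ H] [CompleteSpace H]
    (C : NonUnitalStarSubalgebra ℂ (H →L[ℂ] H)) (hC : IsClosed (C : Set (H →L[ℂ] H)))
    (X : Submodule ℂ (H →L[ℂ] H)) (hXcl : IsClosed (X : Set (H →L[ℂ] H)))
    (hCX : (C : Set (H →L[ℂ] H)) * (X : Set (H →L[ℂ] H)) ⊆ (X : Set (H →L[ℂ] H)))
    (hXC : (X : Set (H →L[ℂ] H)) * (C : Set (H →L[ℂ] H)) ⊆ (X : Set (H →L[ℂ] H)))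
    (hXX : (star '' (X : Set (H →L[ℂ] H))) * (X : Set (H →L[ℂ] H)) ⊆ (C : Set (H →L[ℂ] H)))
    -- `T x` is the operator `x ⊗ U` and `S c` is the operator `c ⊗ I` on `H ⊗ ℓ²(ℤ)`:
    (T S : (H →L[ℂ] H) → (lp (fun _ : ℤ => H) 2 →L[ℂ] lp (fun _ : ℤ => H) 2))
    (hT : ∀ (x : H →L[ℂ] H) (f : lp (fun _ : ℤ => H) 2) (n : ℤ),
      (T x f : ∀ _ : ℤ, H) n = x ((f : ∀ _ : ℤ, H) (n + 1)))
    (hS : ∀ (x : H →L[ℂ] H) (f : lp (fun _ : ℤ => H) 2) (n : ℤ),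
      (S x f : ∀ _ : ℤ, H) n = x ((f : ∀ _ : ℤ, H) n))
    (A : Set (lp (fun _ : ℤ => H) 2 →L[ℂ] lp (fun _ : ℤ => H) 2))
    (hA : A = closure (NonUnitalAlgebra.adjoin ℂ
      (T '' (X : Set (H →L[ℂ] H)) ∪ S '' (C : Set (H →L[ℂ] H))) : Set _)) :
    star '' A * A ⊆ closure (A + star '' A) := by
  classical
  -- pointwise composition identities
  have hSS : ∀ a b : (H →L[ℂ] H), S a * S b = S (a * b) := by
    intro a b
    refine ContinuousLinearMap.ext fun f => lp.ext (funext fun n => ?_)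
    show (S a (S b f) : ∀ _ : ℤ, H) n = _
    rw [hS, hS, hS]; rfl
  have hST : ∀ a b : (H →L[ℂ] H), S a * T b = T (a * b) := by
    intro a b
    refine ContinuousLinearMap.ext fun f => lp.ext (funext fun n => ?_)
    show (S a (T b f) : ∀ _ : ℤ, H) n = _
    rw [hS, hT, hT]; rfl
  have hTS : ∀ a b : (H →L[ℂ] H), T a * S b = T (a * b) := by
    intro a b
    refine ContinuousLinearMap.ext fun f => lp.ext (funext fun n => ?_)
    show (T a (S b f) : ∀ _ : ℤ, H) n = _
    rw [hT, hS, hT]; rfl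
  -- adjoint identities
  have hSstar : ∀ c : (H →L[ℂ] H), star (S c) = S (star c) := by
    intro c
    rw [ContinuousLinearMap.star_eq_adjoint, eq_comm, ContinuousLinearMap.eq_adjoint_iff]
    intro f g
    rw [lp.inner_eq_tsum, lp.inner_eq_tsum]
    refine tsum_congr fun n => ?_
    rw [hS, hS, ContinuousLinearMap.star_eq_adjoint, ContinuousLinearMap.adjoint_inner_left]
  have hTT : ∀ x y : (H →L[ℂ] H), star (T x) * T y = S (star x * y) := by
    intro x y
    refine ContinuousLinearMap.ext fun g => ?_
    refine ext_inner_left ℂ fun f => ?_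
    have h1 : (inner ℂ f ((star (T x) * T y) g) : ℂ) = inner ℂ (T x f) (T y g) := by
      rw [ContinuousLinearMap.mul_apply, ContinuousLinearMap.star_eq_adjoint,
        ContinuousLinearMap.adjoint_inner_right]
    rw [h1, lp.inner_eq_tsum, lp.inner_eq_tsum]
    have h2 : ∀ n : ℤ, (inner ℂ ((T x f : ∀ _ : ℤ, H) n) ((T y g : ∀ _ : ℤ, H) n) : ℂ)
        = inner ℂ ((f : ∀ _ : ℤ, H) (n + 1)) ((star x * y) ((g : ∀ _ : ℤ, H) (n + 1))) := by
      intro n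
      rw [hT, hT, ContinuousLinearMap.mul_apply, ContinuousLinearMap.star_eq_adjoint,
        ContinuousLinearMap.adjoint_inner_right]
    calc (∑' n : ℤ, (inner ℂ ((T x f : ∀ _ : ℤ, H) n) ((T y g : ∀ _ : ℤ, H) n) : ℂ))
        = ∑' n : ℤ, (inner ℂ ((f : ∀ _ : ℤ, H) (n + 1))
            ((star x * y) ((g : ∀ _ : ℤ, H) (n + 1))) : ℂ) := tsum_congr h2
      _ = ∑' n : ℤ, (inner ℂ ((f : ∀ _ : ℤ, H) n)
            ((star x * y) ((g : ∀ _ : ℤ, H) n)) : ℂ) :=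
          (Equiv.addRight (1 : ℤ)).tsum_eq
            (fun n => (inner ℂ ((f : ∀ _ : ℤ, H) n) ((star x * y) ((g : ∀ _ : ℤ, H) n)) : ℂ))
      _ = ∑' n : ℤ, (inner ℂ ((f : ∀ _ : ℤ, H) n)
            ((S (star x * y) g : ∀ _ : ℤ, H) n) : ℂ) := by
          refine tsum_congr fun n => ?_; rw [hS]
  have hTSstar : ∀ (x c : (H →L[ℂ] H)), star (T x) * S c = star (T (star c * x)) := by
    intro x c
    have : T (star c * x) = S (star c) * T x := (hST _ _).symm
    rw [this, star_mul, hSstar, star_star]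
  -- the algebra and auxiliary sets
  set G : Set (lp (fun _ : ℤ => H) 2 →L[ℂ] lp (fun _ : ℤ => H) 2) := T '' (X : Set (H →L[ℂ] H)) ∪ S '' (C : Set (H →L[ℂ] H)) with hG
  set B := NonUnitalAlgebra.adjoin ℂ G with hB
  set W := Submodule.span ℂ G with hW
  set K0 : Set (lp (fun _ : ℤ => H) 2 →L[ℂ] lp (fun _ : ℤ => H) 2) := (B : Set _) + star '' (W : Set _) with hK0
  set K : Set (lp (fun _ : ℤ => H) 2 →L[ℂ] lp (fun _ : ℤ => H) 2) := (B : Set _) + star '' (B : Set _) with hK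
  have hBK0 : ∀ u, u ∈ B → u ∈ K0 := fun u hu =>
    ⟨u, hu, star 0, ⟨0, zero_mem _, rfl⟩, by simp⟩
  have hWK0 : ∀ w, w ∈ W → star w ∈ K0 := fun w hw =>
    ⟨0, zero_mem _, star w, ⟨w, hw, rfl⟩, by simp⟩
  have hBK : ∀ u, u ∈ B → u ∈ K := fun u hu =>
    ⟨u, hu, star 0, ⟨0, zero_mem _, rfl⟩, by simp⟩
  have hBK' : ∀ w, w ∈ B → star w ∈ K := fun w hw =>
    ⟨0, zero_mem _, star w, ⟨w, hw, rfl⟩, by simp⟩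
  have hK0add : ∀ u v, u ∈ K0 → v ∈ K0 → u + v ∈ K0 := by
    rintro _ _ ⟨u, hu, _, ⟨w, hw, rfl⟩, rfl⟩ ⟨u', hu', _, ⟨w', hw', rfl⟩, rfl⟩
    exact ⟨u + u', add_mem hu hu', star (w + w'), ⟨w + w', add_mem hw hw', rfl⟩, by
      rw [star_add]; exact add_add_add_comm _ _ _ _⟩
  have hK0smul : ∀ (z : ℂ) u, u ∈ K0 → z • u ∈ K0 := by
    rintro z _ ⟨u, hu, _, ⟨w, hw, rfl⟩, rfl⟩
    exact ⟨z • u, SMulMemClass.smul_mem z hu, star ((starRingEnd ℂ z) • w),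
      ⟨(starRingEnd ℂ z) • w, SMulMemClass.smul_mem _ hw, rfl⟩, by
        rw [star_smul, starRingEnd_apply, star_star, smul_add]⟩
  have hKadd : ∀ u v, u ∈ K → v ∈ K → u + v ∈ K := by
    rintro _ _ ⟨u, hu, _, ⟨w, hw, rfl⟩, rfl⟩ ⟨u', hu', _, ⟨w', hw', rfl⟩, rfl⟩
    exact ⟨u + u', add_mem hu hu', star (w + w'), ⟨w + w', add_mem hw hw', rfl⟩, by
      rw [star_add]; exact add_add_add_comm _ _ _ _⟩
  have hKsmul : ∀ (z : ℂ) u, u ∈ K → z • u ∈ K := by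
    rintro z _ ⟨u, hu, _, ⟨w, hw, rfl⟩, rfl⟩
    exact ⟨z • u, SMulMemClass.smul_mem z hu, star ((starRingEnd ℂ z) • w),
      ⟨(starRingEnd ℂ z) • w, SMulMemClass.smul_mem _ hw, rfl⟩, by
        rw [star_smul, starRingEnd_apply, star_star, smul_add]⟩
  have hK0zero : (0 : lp (fun _ : ℤ => H) 2 →L[ℂ] lp (fun _ : ℤ => H) 2) ∈ K0 := hBK0 0 (zero_mem _)
  have hKzero : (0 : lp (fun _ : ℤ => H) 2 →L[ℂ] lp (fun _ : ℤ => H) 2) ∈ K := hBK 0 (zero_mem _)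
  -- base case: star of a generator times a generator
  have hgen : ∀ g ∈ G, ∀ g' ∈ G, star g * g' ∈ K0 := by
    rintro g hg g' hg'
    rcases hg with ⟨x, hx, rfl⟩ | ⟨c, hc, rfl⟩
    · rcases hg' with ⟨y, hy, rfl⟩ | ⟨c, hc, rfl⟩
      · -- star (T x) * T y = S (star x * y) ∈ S '' C
        rw [hTT]
        refine hBK0 _ (NonUnitalAlgebra.subset_adjoin ℂ (Or.inr ⟨star x * y, ?_, rfl⟩))
        exact hXX ⟨star x, ⟨x, hx, rfl⟩, y, hy, rfl⟩
      · -- star (T x) * S c = star (T (star c * x))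
        rw [hTSstar]
        refine hWK0 _ (Submodule.subset_span (Or.inl ⟨star c * x, ?_, rfl⟩))
        exact hCX ⟨star c, C.star_mem' hc, x, hx, rfl⟩
    · rw [hSstar]
      rcases hg' with ⟨y, hy, rfl⟩ | ⟨c', hc', rfl⟩
      · rw [hST]
        refine hBK0 _ (NonUnitalAlgebra.subset_adjoin ℂ (Or.inl ⟨star c * y, ?_, rfl⟩))
        exact hCX ⟨star c, C.star_mem' hc, y, hy, rfl⟩
      · rw [hSS]
        refine hBK0 _ (NonUnitalAlgebra.subset_adjoin ℂ (Or.inr ⟨star c * c', ?_, rfl⟩))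
        exact mul_mem (C.star_mem' hc) hc'
  -- step 1 : star of a generator times anything in B lies in K0
  have step1 : ∀ b ∈ B, ∀ g ∈ G, star g * b ∈ K0 := by
    intro b hb
    induction hb using NonUnitalAlgebra.adjoin_induction with
    | mem b hbG => exact fun g hg => hgen g hg b hbG
    | add b₁ b₂ hb₁ hb₂ ih₁ ih₂ =>
        intro g hg
        rw [mul_add]
        exact hK0add _ _ (ih₁ g hg) (ih₂ g hg)
    | zero => intro g hg; rw [mul_zero]; exact hK0zero
    | mul b₁ b₂ hb₁ hb₂ ih₁ ih₂ =>
        intro g hg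
        rw [← mul_assoc]
        rcases ih₁ g hg with ⟨u, hu, _, ⟨w, hw, rfl⟩, heq⟩
        rw [← heq, add_mul]
        refine hK0add _ _ (hBK0 _ (mul_mem hu hb₂)) ?_
        -- star w * b₂ ∈ K0 by span induction on w
        clear heq
        induction hw using Submodule.span_induction with
        | mem w hwG => exact ih₂ w hwG
        | zero => rw [star_zero, zero_mul]; exact hK0zero
        | add w₁ w₂ hw₁ hw₂ ihw₁ ihw₂ =>
            rw [star_add, add_mul]; exact hK0add _ _ ihw₁ ihw₂
        | smul z w hw ihw =>
            rw [star_smul, smul_mul_assoc]; exact hK0smul _ _ ihw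
    | smul z b hb ih =>
        intro g hg
        rw [mul_smul_comm]
        exact hK0smul _ _ (ih g hg)
  have hWB : (W : Set (lp (fun _ : ℤ => H) 2 →L[ℂ] lp (fun _ : ℤ => H) 2)) ⊆ (B : Set _) := by
    intro w hw
    have hle : W ≤ B.toSubmodule :=
      Submodule.span_le.mpr (fun g hg => NonUnitalAlgebra.subset_adjoin ℂ hg)
    exact hle hw
  have hK0K : K0 ⊆ K := by
    rintro _ ⟨u, hu, _, ⟨w, hw, rfl⟩, rfl⟩
    exact ⟨u, hu, star w, ⟨w, hWB hw, rfl⟩, rfl⟩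
  -- step 2 : star B * B ⊆ K
  have step2 : ∀ a ∈ B, ∀ b ∈ B, star a * b ∈ K := by
    intro a ha
    induction ha using NonUnitalAlgebra.adjoin_induction with
    | mem a haG => exact fun b hb => hK0K (step1 b hb a haG)
    | add a₁ a₂ ha₁ ha₂ ih₁ ih₂ =>
        intro b hb
        rw [star_add, add_mul]
        exact hKadd _ _ (ih₁ b hb) (ih₂ b hb)
    | zero => intro b hb; rw [star_zero, zero_mul]; exact hKzero
    | mul a₁ a₂ ha₁ ha₂ ih₁ ih₂ =>
        intro b hb
        rw [star_mul, mul_assoc]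
        rcases ih₁ b hb with ⟨u, hu, _, ⟨w, hw, rfl⟩, heq⟩
        rw [← heq, mul_add]
        refine hKadd _ _ (ih₂ u hu) ?_
        rw [← star_mul]
        exact hBK' _ (mul_mem hw ha₂)
    | smul z a ha ih =>
        intro b hb
        rw [star_smul, smul_mul_assoc]
        exact hKsmul _ _ (ih b hb)
  -- pass to closures
  rintro _ ⟨_, ⟨a, ha, rfl⟩, b, hb, rfl⟩
  rw [hA] at ha hb ⊢
  have hcont : Continuous fun p : (lp (fun _ : ℤ => H) 2 →L[ℂ] lp (fun _ : ℤ => H) 2) × (lp (fun _ : ℤ => H) 2 →L[ℂ] lp (fun _ : ℤ => H) 2) => star p.1 * p.2 :=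
    (continuous_star.comp continuous_fst).mul continuous_snd
  have hmem : star a * b ∈ closure K :=
    map_mem_closure₂ (f := fun p q : (lp (fun _ : ℤ => H) 2 →L[ℂ] lp (fun _ : ℤ => H) 2) =>
      star p * q) hcont ha hb (fun p hp q hq => step2 p hp q hq)
  refine closure_mono ?_ hmem
  rintro _ ⟨u, hu, _, ⟨w, hw, rfl⟩, rfl⟩
  exact Set.add_mem_add (subset_closure hu)
    (Set.mem_image_of_mem star (subset_closure hw))
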